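/- Let k be a field of characteristic 2, G a finite group, and L, L' two G-Galois algebras over k. Let k' be a purely inseparable field extension of k. If there exists a k'-linear bijection θ : k' ⊗ₖ L → k' ⊗ₖ L' commuting with the G-actions (θ((1⊗g) • u) = (1⊗g) • θ(u) for all g ∈ G) and carrying the base change to k' of the G-trace form q_L to the base change of q_{L'}, then the G-trace forms q_L and q_{L'} are already isomorphic over k. -/

import Mathlib

open TensorProduct

/-- A `G`-Galois algebra over `k`: a commutative `k`-algebra with an action of `G` by
`k`-algebra automorphisms, whose trace form is nondegenerate (étale), and admitting a
normal basis, i.e. an element `v` whose `G`-orbit `(g • v)_{g ∈ G}` is a `k`-basis. -/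
def IsGaloisAlgebra (k G L : Type*) [Field k] [Group G] [Fintype G] [CommRing L]
    [Algebra k L] [MulSemiringAction G L] [SMulCommClass G k L] : Prop :=
  LinearMap.BilinForm.Nondegenerate (Algebra.traceForm k L) ∧
    ∃ v : L, LinearIndependent k (fun g : G => g • v) ∧
      Submodule.span k (Set.range fun g : G => g • v) = ⊤

set_option maxHeartbeats 1000000

section Aux

variable {k : Type*} [Field k] [CharP k 2]

theorem aux_matrix_trace_sq {ι R : Type*} [Fintype ι] [CommRing R] [CharP R 2]
    (M : Matrix ι ι R) : (M * M).trace = M.trace ^ 2 := by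
  classical
  haveI : Fact (Nat.Prime 2) := ⟨Nat.prime_two⟩
  have h1 : (M * M).trace = ∑ p : ι × ι, M p.1 p.2 * M p.2 p.1 := by
    rw [← Finset.univ_product_univ, Finset.sum_product]
    simp [Matrix.trace, Matrix.diag, Matrix.mul_apply]
  have h2 : M.trace ^ 2 = ∑ i : ι, M i i ^ 2 := by
    rw [Matrix.trace, sum_pow_char]
    rfl
  rw [h1, h2]
  rw [← Finset.sum_filter_add_sum_filter_not Finset.univ (fun p : ι × ι => p.1 = p.2)]
  have hd : ∑ p ∈ Finset.univ.filter (fun p : ι × ι => p.1 = p.2),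
      M p.1 p.2 * M p.2 p.1 = ∑ i : ι, M i i ^ 2 := by
    rw [Finset.sum_filter, ← Finset.univ_product_univ, Finset.sum_product]
    simp [sq]
  have ho : ∑ p ∈ Finset.univ.filter (fun p : ι × ι => ¬ p.1 = p.2),
      M p.1 p.2 * M p.2 p.1 = 0 := by
    refine Finset.sum_involution (fun p _ => p.swap) ?_ ?_ ?_ ?_
    · intro p hp
      rw [Prod.fst_swap, Prod.snd_swap, mul_comm]
      exact CharTwo.add_self_eq_zero _
    · intro p hp _
      simp only [Finset.mem_filter] at hp
      intro h
      exact hp.2 (by simpa using (congrArg Prod.fst h).symm)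
    · intro p hp
      simp only [Finset.mem_filter, Finset.mem_univ, true_and] at hp ⊢
      exact fun h => hp h.symm
    · intro p hp
      exact Prod.swap_swap p
  rw [hd, ho, add_zero]

end Aux

section Aux2

variable {k : Type*} [Field k] [CharP k 2]

theorem aux_trace_sq {L : Type*} [CommRing L] [Algebra k L] {ι : Type*} [Fintype ι]
    (b : Module.Basis ι k L) (x : L) :
    Algebra.trace k L (x * x) = Algebra.trace k L x ^ 2 := by
  classical
  rw [Algebra.trace_eq_matrix_trace b, Algebra.trace_eq_matrix_trace b, map_mul,
    aux_matrix_trace_sq]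

theorem aux_trace_pow {L : Type*} [CommRing L] [Algebra k L] {ι : Type*} [Fintype ι]
    (b : Module.Basis ι k L) (x : L) (n : ℕ) :
    Algebra.trace k L (x ^ 2 ^ n) = Algebra.trace k L x ^ 2 ^ n := by
  induction n with
  | zero => simp
  | succ n ih =>
    rw [pow_succ, pow_mul, sq (x ^ 2 ^ n), aux_trace_sq b, ih, ← pow_mul, ← pow_succ]

theorem aux_traceForm_pow {L : Type*} [CommRing L] [Algebra k L] {ι : Type*} [Fintype ι]
    (b : Module.Basis ι k L) (x y : L) (n : ℕ) :
    Algebra.traceForm k L (x ^ 2 ^ n) (y ^ 2 ^ n) = Algebra.traceForm k L x y ^ 2 ^ n := by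
  rw [Algebra.traceForm_apply, Algebra.traceForm_apply, ← mul_pow, aux_trace_pow b]

end Aux2

/-- Serre's proposition 6.2.1: `G`-trace forms of `G`-Galois algebras over a field `k`
of characteristic 2 that become isomorphic over a purely inseparable extension `k'` of
`k` are already isomorphic over `k`. Here the isomorphism over `k'` is a `k'`-linear
bijection `θ : k' ⊗ₖ L → k' ⊗ₖ L'` commuting with the (base-changed) `G`-actions and
carrying the base change of the trace form of `L` to that of `L'`. -/
theorem stmt_13 (k k' G L L' : Type*) [Field k] [CharP k 2] [Field k'] [Algebra k k']
    [IsPurelyInseparable k k'] [Group G] [Fintype G]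
    [CommRing L] [Algebra k L] [MulSemiringAction G L] [SMulCommClass G k L]
    [CommRing L'] [Algebra k L'] [MulSemiringAction G L'] [SMulCommClass G k L']
    (hL : IsGaloisAlgebra k G L) (hL' : IsGaloisAlgebra k G L')
    (θ : (k' ⊗[k] L) ≃ₗ[k'] (k' ⊗[k] L'))
    (hequiv : ∀ (g : G) (u : k' ⊗[k] L),
      θ (LinearMap.baseChange k' (DistribMulAction.toLinearMap k L g) u) =
        LinearMap.baseChange k' (DistribMulAction.toLinearMap k L' g) (θ u))
    (hform : ∀ u v : k' ⊗[k] L,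
      (Algebra.traceForm k L').baseChange k' (θ u) (θ v) =
        (Algebra.traceForm k L).baseChange k' u v) :
    ∃ θ₀ : L ≃ₗ[k] L', (∀ (g : G) (x : L), θ₀ (g • x) = g • θ₀ x) ∧
      ∀ x y : L, Algebra.traceForm k L' (θ₀ x) (θ₀ y) = Algebra.traceForm k L x y := by
  classical
  haveI : Fact (Nat.Prime 2) := ⟨Nat.prime_two⟩
  haveI : CharP k' 2 := charP_of_injective_algebraMap (algebraMap k k').injective 2
  obtain ⟨hnd, v, hli, hsp⟩ := hL
  obtain ⟨hnd', v', hli', hsp'⟩ := hL'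
  let B : Module.Basis G k L := Module.Basis.mk hli (by rw [hsp])
  let B' : Module.Basis G k L' := Module.Basis.mk hli' (by rw [hsp'])
  have hB : ∀ g : G, B g = g • v := fun g => by simp [B]
  have hB' : ∀ g : G, B' g = g • v' := fun g => by simp [B']
  haveI : Module.Finite k L := Module.Finite.of_basis B
  haveI : Module.Finite k L' := Module.Finite.of_basis B'
  -- coefficients of θ(1 ⊗ v)
  set c : G → k' := fun h => ((B'.baseChange k').repr (θ (1 ⊗ₜ[k] v))) h with hc
  have hv : θ (1 ⊗ₜ[k] v) = ∑ h : G, c h • ((1:k') ⊗ₜ[k] (h • v')) := by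
    conv_lhs => rw [← (B'.baseChange k').sum_repr (θ (1 ⊗ₜ[k] v))]
    refine Finset.sum_congr rfl fun h _ => ?_
    rw [Module.Basis.baseChange_apply, hB']
  have hgv : ∀ g : G, θ ((1:k') ⊗ₜ[k] (g • v)) = ∑ h : G, c h • ((1:k') ⊗ₜ[k] ((g * h) • v')) := by
    intro g
    have h1 : (1 : k') ⊗ₜ[k] (g • v) =
        LinearMap.baseChange k' (DistribMulAction.toLinearMap k L g) ((1:k') ⊗ₜ[k] v) := by
      rw [LinearMap.baseChange_tmul]; rfl
    rw [h1, hequiv, hv, map_sum]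
    refine Finset.sum_congr rfl fun h _ => ?_
    rw [map_smul, LinearMap.baseChange_tmul]
    have : (DistribMulAction.toLinearMap k L' g) (h • v') = (g * h) • v' := by
      rw [mul_smul]; rfl
    rw [this]
  -- the key identity over k'
  have hkey : ∀ g₁ g₂ : G,
      ∑ h : G, ∑ j : G, (c h * c j) *
        algebraMap k k' (Algebra.traceForm k L' ((g₁ * h) • v') ((g₂ * j) • v')) =
      algebraMap k k' (Algebra.traceForm k L (g₁ • v) (g₂ • v)) := by
    intro g₁ g₂
    have H := hform ((1:k') ⊗ₜ[k] (g₁ • v)) ((1:k') ⊗ₜ[k] (g₂ • v))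
    rw [hgv, hgv] at H
    simp only [map_sum, LinearMap.sum_apply, map_smul, LinearMap.smul_apply,
      LinearMap.BilinForm.baseChange_tmul, mul_one, ← Algebra.algebraMap_eq_smul_one, smul_eq_mul] at H
    rw [← H, Finset.sum_comm]
    refine Finset.sum_congr rfl fun h _ => ?_
    rw [Finset.mul_sum]
    exact Finset.sum_congr rfl fun j _ => by ring
  -- choose Frobenius exponent
  choose nn hnn using fun h : G => IsPurelyInseparable.pow_mem k 2 (c h)
  set n : ℕ := Finset.univ.sup nn with hn
  have hcd : ∀ h : G, ∃ dd : k, algebraMap k k' dd = c h ^ 2 ^ n := by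
    intro h
    obtain ⟨dd, hdd⟩ := hnn h
    refine ⟨dd ^ 2 ^ (n - nn h), ?_⟩
    have hle : nn h ≤ n := Finset.le_sup (Finset.mem_univ h)
    rw [map_pow, hdd, ← pow_mul, ← pow_add, Nat.add_sub_cancel' hle]
  choose d hd using hcd
  have E1 : ∀ g₁ g₂ : G,
      ∑ h : G, ∑ j : G, (d h * d j) *
        (Algebra.traceForm k L' ((g₁ * h) • v') ((g₂ * j) • v')) ^ 2 ^ n =
      (Algebra.traceForm k L (g₁ • v) (g₂ • v)) ^ 2 ^ n := by
    intro g₁ g₂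
    apply (algebraMap k k').injective
    have H := congrArg (fun z : k' => z ^ 2 ^ n) (hkey g₁ g₂)
    simp only [sum_pow_char_pow, mul_pow, map_pow] at H
    simp only [map_sum, map_mul, map_pow, hd]
    exact H
  set w : L := v ^ 2 ^ n with hw
  set w' : L' := v' ^ 2 ^ n with hw'
  have E2 : ∀ g₁ g₂ : G,
      ∑ h : G, ∑ j : G, (d h * d j) *
        Algebra.traceForm k L' ((g₁ * h) • w') ((g₂ * j) • w') =
      Algebra.traceForm k L (g₁ • w) (g₂ • w) := by
    intro g₁ g₂
    simp only [hw, hw', smul_pow', aux_traceForm_pow B', aux_traceForm_pow B]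
    exact E1 g₁ g₂
  -- the twisted family is again a basis of L
  set M₀ : Matrix G G k := LinearMap.BilinForm.toMatrix B (Algebra.traceForm k L) with hM₀
  have hdet₀ : M₀.det ≠ 0 := by
    rw [← LinearMap.BilinForm.nondegenerate_iff_det_ne_zero (b := B)]
    exact hnd
  set Mw : Matrix G G k := Matrix.of (fun g h => Algebra.traceForm k L (g • w) (h • w)) with hMw
  have hMweq : Mw = M₀.map (iterateFrobenius k 2 n) := by
    ext g h
    simp only [hMw, hM₀, Matrix.map_apply, Matrix.of_apply, iterateFrobenius_def,
      LinearMap.BilinForm.toMatrix_apply, hB]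
    rw [hw, smul_pow', smul_pow', aux_traceForm_pow B]
  have hdetw : Mw.det ≠ 0 := by
    rw [hMweq, ← RingHom.mapMatrix_apply, ← RingHom.map_det]
    simpa [iterateFrobenius_def] using pow_ne_zero (2 ^ n) hdet₀
  have hliw : LinearIndependent k (fun g : G => g • w) := by
    rw [Fintype.linearIndependent_iff]
    intro a ha
    have hmv : Mw.mulVec a = 0 := by
      funext g₀
      have h2 := congrArg (fun z => Algebra.traceForm k L (g₀ • w) z) ha
      simpa [Matrix.mulVec, dotProduct, map_sum, map_smul, mul_comm, hMw] using h2
    intro g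
    exact congrFun (Matrix.eq_zero_of_mulVec_eq_zero hdetw hmv) g
  haveI : Nonempty G := ⟨1⟩
  have hcardL : Fintype.card G = Module.finrank k L := (Module.finrank_eq_card_basis B).symm
  have hspw := hliw.span_eq_top_of_card_eq_finrank hcardL
  set Bw : Module.Basis G k L := Module.Basis.mk hliw (by rw [hspw]) with hBwdef
  have hBw : ∀ g : G, Bw g = g • w := fun g => by simp [hBwdef]
  set θl : L →ₗ[k] L' := Bw.constr k (fun g : G => ∑ h : G, d h • ((g * h) • w')) with hθldef
  have hθl : ∀ g : G, θl (g • w) = ∑ h : G, d h • ((g * h) • w') := by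
    intro g
    conv_lhs => rw [← hBw g]
    exact Bw.constr_basis k _ g
  have heqv : ∀ (g : G) (x : L), θl (g • x) = g • θl x := by
    intro g
    suffices h : (θl ∘ₗ DistribMulAction.toLinearMap k L g)
        = (DistribMulAction.toLinearMap k L' g ∘ₗ θl) by
      intro x
      exact LinearMap.congr_fun h x
    refine Module.Basis.ext Bw fun g' => ?_
    have hBwg : Bw g' = g' • w := hBw g'
    simp only [LinearMap.comp_apply, DistribMulAction.toLinearMap, DistribSMul.toLinearMap_apply, hBwg]
    rw [← mul_smul, hθl, hθl, Finset.smul_sum]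
    refine Finset.sum_congr rfl fun h _ => ?_
    rw [smul_comm g (d h), ← mul_smul, mul_assoc]
  have hiso : ∀ x y : L, Algebra.traceForm k L' (θl x) (θl y) = Algebra.traceForm k L x y := by
    have h : ((Algebra.traceForm k L').compl₁₂ θl θl) = Algebra.traceForm k L := by
      refine LinearMap.ext_basis Bw Bw fun g₁ g₂ => ?_
      simp only [LinearMap.compl₁₂_apply, hBw]
      rw [hθl, hθl]
      simp only [map_sum, LinearMap.sum_apply, map_smul, LinearMap.smul_apply, smul_eq_mul]
      rw [← E2 g₁ g₂, Finset.sum_comm]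
      refine Finset.sum_congr rfl fun h _ => ?_
      rw [Finset.mul_sum]
      exact Finset.sum_congr rfl fun j _ => by ring
    intro x y
    have := LinearMap.congr_fun (LinearMap.congr_fun h x) y
    simpa only [LinearMap.compl₁₂_apply] using this
  have hinj : Function.Injective θl := by
    rw [← LinearMap.ker_eq_bot, Submodule.eq_bot_iff]
    intro x hx
    refine hnd.1 x fun y => ?_
    rw [← hiso x y, LinearMap.mem_ker.mp hx]
    simp
  have hrank : Module.finrank k L = Module.finrank k L' := by
    rw [Module.finrank_eq_card_basis B, Module.finrank_eq_card_basis B']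
  have hsurj : Function.Surjective θl :=
    (LinearMap.injective_iff_surjective_of_finrank_eq_finrank hrank).mp hinj
  refine ⟨LinearEquiv.ofBijective θl ⟨hinj, hsurj⟩, fun g x => ?_, fun x y => ?_⟩
  · exact heqv g x
  · exact hiso x y
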